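/- arXiv:2403.12735 — 4 statements merged into one kernel-verified Lean document; each statement's English description precedes it below -/
import Mathlib

section
/- The functions (m, a, b) defined by m(t) = m₀(T/(T-t))^{(λ/2)ρ₀T}, a(t) = (m(t)/ρ(t))² with ρ(t) = ρ₀T/(T-t), and b(t) = -1/(T-t), satisfy the system m' = λm²/(2√a), a' = 2ab + λm√a, a'b + 2ab' - λm√a·b = 0 on [0,T). -/
/-- The explicit functions `m, a, b` satisfy the ODE system
`m' = λm²/(2√a)`, `a' = 2ab + λm√a`, `a'b + 2ab' - λm√a·b = 0` on `[0,T)`. -/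
theorem explicit_solves_system (T ρ₀ m₀ lam : ℝ) (hT : 0 < T) (hρ₀ : 0 < ρ₀)
    (hm₀ : 0 < m₀) (hlam : 0 < lam)
    (m a b ρ : ℝ → ℝ)
    (hρ : ∀ t ∈ Set.Iio T, ρ t = ρ₀ * T / (T - t))
    (hm : ∀ t ∈ Set.Iio T, m t = m₀ * (T / (T - t)) ^ (lam / 2 * ρ₀ * T))
    (ha : ∀ t ∈ Set.Iio T, a t = (m t / ρ t) ^ 2)
    (hb : ∀ t ∈ Set.Iio T, b t = -1 / (T - t)) :
    ∀ t ∈ Set.Ico (0:ℝ) T,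
      HasDerivAt m (lam * (m t) ^ 2 / (2 * Real.sqrt (a t))) t ∧
      HasDerivAt a (2 * a t * b t + lam * m t * Real.sqrt (a t)) t ∧
      deriv a t * b t + 2 * a t * deriv b t - lam * m t * Real.sqrt (a t) * b t = 0 := by
  intro t ht
  obtain ⟨ht0, htT⟩ := ht
  have hTt : 0 < T - t := sub_pos.2 htT
  set α : ℝ := lam / 2 * ρ₀ * T with hα
  have hmem : Set.Iio T ∈ nhds t := isOpen_Iio.mem_nhds htT
  have hmt : m t = m₀ * (T / (T - t)) ^ α := hm t htT
  have hμ : 0 < m t := by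
    rw [hmt]
    have : 0 < T / (T - t) := div_pos hT hTt
    positivity
  have hρt : ρ t = ρ₀ * T / (T - t) := hρ t htT
  have hat : a t = (m t / ρ t) ^ 2 := ha t htT
  have hbt : b t = -1 / (T - t) := hb t htT
  have hsq : Real.sqrt (a t) = m t * (T - t) / (ρ₀ * T) := by
    rw [hat, hρt]
    have h1 : m t / (ρ₀ * T / (T - t)) = m t * (T - t) / (ρ₀ * T) := by
      field_simp
    rw [h1, Real.sqrt_sq (by positivity)]
  have hTs : HasDerivAt (fun s : ℝ => T - s) (-1) t := by
    simpa using (hasDerivAt_id t).const_sub T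
  -- derivative of m
  have hMder : HasDerivAt m (α / (T - t) * m t) t := by
    have h1 : HasDerivAt (fun s : ℝ => m₀ * (T ^ α * (T - s) ^ (-α)))
        (m₀ * (T ^ α * (-1 * (-α) * (T - t) ^ (-α - 1)))) t :=
      ((hTs.rpow_const (Or.inl hTt.ne')).const_mul (T ^ α)).const_mul m₀
    have heq : m =ᶠ[nhds t] fun s => m₀ * (T ^ α * (T - s) ^ (-α)) := by
      filter_upwards [hmem] with s hs
      have hs' : 0 < T - s := sub_pos.2 hs
      rw [hm s hs, Real.div_rpow hT.le hs'.le, Real.rpow_neg hs'.le, div_eq_mul_inv]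
    have h2 := h1.congr_of_eventuallyEq heq
    refine h2.congr_deriv ?_
    rw [hmt, Real.div_rpow hT.le hTt.le]
    have h3 : (T - t) ^ (-α - 1) = ((T - t) ^ α)⁻¹ * (T - t)⁻¹ := by
      rw [show -α - 1 = -α + (-1) by ring, Real.rpow_add hTt, Real.rpow_neg hTt.le,
        Real.rpow_neg_one]
    have h4 : (0:ℝ) < (T - t) ^ α := Real.rpow_pos_of_pos hTt α
    rw [h3]
    field_simp
  -- derivative of a
  have hg : HasDerivAt (fun s => m s * (T - s) / (ρ₀ * T))
      ((α / (T - t) * m t * (T - t) + m t * (-1)) / (ρ₀ * T)) t :=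
    (hMder.mul hTs).div_const _
  have hA : HasDerivAt a
      (2 * (m t * (T - t) / (ρ₀ * T)) *
        ((α / (T - t) * m t * (T - t) + m t * (-1)) / (ρ₀ * T))) t := by
    have h2 := hg.pow 2
    have heq : a =ᶠ[nhds t] fun s => (m s * (T - s) / (ρ₀ * T)) ^ 2 := by
      filter_upwards [hmem] with s hs
      have hs' : 0 < T - s := sub_pos.2 hs
      rw [ha s hs, hρ s hs]
      field_simp
    have h3 := h2.congr_of_eventuallyEq heq
    refine h3.congr_deriv ?_
    push_cast
    ring
  -- derivative of b
  have hBder : HasDerivAt b (-(-(-1) / (T - t) ^ 2)) t := by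
    have h1 : HasDerivAt (fun s : ℝ => -((T - s)⁻¹)) (-(-(-1) / (T - t) ^ 2)) t :=
      (hTs.inv hTt.ne').neg
    have heq : b =ᶠ[nhds t] fun s => -((T - s)⁻¹) := by
      filter_upwards [hmem] with s hs
      rw [hb s hs]
      field_simp
    exact h1.congr_of_eventuallyEq heq
  refine ⟨?_, ?_, ?_⟩
  · convert hMder using 1
    rw [hsq, hα]
    field_simp
  · convert hA using 1
    rw [hsq, hat, hρt, hbt, hα]
    field_simp
    ring
  · rw [hA.deriv, hBder.deriv, hsq, hat, hρt, hbt, hα]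
    field_simp
    ring
end

section
/- Along solutions of the characteristic ODE Ẋ = V, V̇ = (λ/2)ρ(t)(b(t)X - V), where ρ(t) = ρ₀T/(T-t), b(t) = -1/(T-t), a(t) = (m(t)/ρ(t))² with m(t) = m₀(T/(T-t))^{(λ/2)ρ₀T}, the quantity α(t) = √(a(t))·(V(t) - b(t)X(t)) is constant in time. -/
open Set Real

/-- Along the characteristic flow `Ẋ = V`, `V̇ = (λ/2)ρ(t)(b(t)X - V)` of the infinite-mass
self-similar solution, the quantity `α = √a (V - bX)` is conserved. -/
theorem alpha_conserved (T ρ₀ m₀ lam : ℝ) (hT : 0 < T) (hρ₀ : 0 < ρ₀)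
    (hm₀ : 0 < m₀) (hlam : 0 < lam)
    (ρ b m a : ℝ → ℝ)
    (hρ : ∀ t ∈ Set.Iio T, ρ t = ρ₀ * T / (T - t))
    (hb : ∀ t ∈ Set.Iio T, b t = -1 / (T - t))
    (hm : ∀ t ∈ Set.Iio T, m t = m₀ * (T / (T - t)) ^ (lam / 2 * ρ₀ * T))
    (ha : ∀ t ∈ Set.Iio T, a t = (m t / ρ t) ^ 2)
    (X V : ℝ → ℝ)
    (hX : ∀ t ∈ Set.Ico (0:ℝ) T, HasDerivAt X (V t) t)
    (hV : ∀ t ∈ Set.Ico (0:ℝ) T,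
      HasDerivAt V (lam / 2 * ρ t * (b t * X t - V t)) t) :
    ∀ t ∈ Set.Ico (0:ℝ) T,
      Real.sqrt (a t) * (V t - b t * X t) =
        Real.sqrt (a 0) * (V 0 - b 0 * X 0) := by
  set c : ℝ := lam / 2 * ρ₀ * T with hc
  set K : ℝ := m₀ * T ^ c / (ρ₀ * T) with hK
  set g : ℝ → ℝ := fun t => K * ((T - t) ^ (1 - c) * V t + (T - t) ^ (-c) * X t) with hg
  -- key: on Iio T, √(a t) * (V t - b t * X t) = g t
  have key : ∀ t ∈ Set.Iio T, Real.sqrt (a t) * (V t - b t * X t) = g t := by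
    intro t ht
    have hu : 0 < T - t := by simp [Set.mem_Iio] at ht; linarith
    have hρt : ρ t = ρ₀ * T / (T - t) := hρ t ht
    have hρpos : 0 < ρ t := by rw [hρt]; positivity
    have hmpos : 0 < m t := by
      rw [hm t ht]; positivity
    have hsq : Real.sqrt (a t) = m t / ρ t := by
      rw [ha t ht, Real.sqrt_sq (by positivity)]
    have hrw : (T / (T - t)) ^ c = T ^ c / (T - t) ^ c :=
      Real.div_rpow hT.le hu.le c
    have hpowne : (T - t) ^ c ≠ 0 := (Real.rpow_pos_of_pos hu c).ne'
    have h1c : (T - t) ^ (1 - c) = (T - t) / (T - t) ^ c := by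
      rw [Real.rpow_sub hu, Real.rpow_one]
    have hnc : (T - t) ^ (-c) = 1 / (T - t) ^ c := by
      rw [Real.rpow_neg hu.le, one_div]
    rw [hsq, hm t ht, hρt, hb t ht]
    simp only [hg, hK]
    rw [hrw, h1c, hnc]
    field_simp
    ring
  -- derivative of g is zero on Ico 0 T
  have hderiv : ∀ t ∈ Set.Ico (0:ℝ) T, HasDerivAt g 0 t := by
    intro t ht
    obtain ⟨ht0, htT⟩ := ht
    have hu : 0 < T - t := by linarith
    have hu1 : HasDerivAt (fun s : ℝ => T - s) (-1) t := by
      simpa using (hasDerivAt_id t).const_sub T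
    have hp : HasDerivAt (fun s : ℝ => (T - s) ^ (1 - c))
        ((1 - c) * (T - t) ^ (1 - c - 1) * (-1)) t :=
      (Real.hasDerivAt_rpow_const (Or.inl hu.ne')).comp t hu1
    have hq : HasDerivAt (fun s : ℝ => (T - s) ^ (-c))
        ((-c) * (T - t) ^ (-c - 1) * (-1)) t :=
      (Real.hasDerivAt_rpow_const (Or.inl hu.ne')).comp t hu1
    have hVt := hV t ⟨ht0, htT⟩
    have hXt := hX t ⟨ht0, htT⟩
    have hD : HasDerivAt g
        (K * (((1 - c) * (T - t) ^ (1 - c - 1) * (-1) * V t +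
          (T - t) ^ (1 - c) * (lam / 2 * ρ t * (b t * X t - V t))) +
          ((-c) * (T - t) ^ (-c - 1) * (-1) * X t + (T - t) ^ (-c) * V t))) t :=
      ((hp.mul hVt).add (hq.mul hXt)).const_mul K
    convert hD using 1
    have hρt : ρ t = ρ₀ * T / (T - t) := hρ t htT
    have hbt : b t = -1 / (T - t) := hb t htT
    have e1 : (T - t) ^ (1 - c - 1) = (T - t) ^ (-c) := by norm_num
    have e2 : (T - t) ^ (1 - c) = (T - t) * (T - t) ^ (-c) := by
      rw [show (1 : ℝ) - c = 1 + (-c) by ring, Real.rpow_add hu, Real.rpow_one]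
    have e3 : (T - t) ^ (-c - 1) = (T - t) ^ (-c) / (T - t) := by
      rw [Real.rpow_sub hu, Real.rpow_one]
    rw [hρt, hbt, e1, e2, e3]
    have hune : (T - t) ≠ 0 := hu.ne'
    field_simp
    ring_nf
    rw [hc]; ring
  -- constancy via mean value
  intro t ht
  obtain ⟨ht0, htT⟩ := ht
  have hcont : ContinuousOn g (Set.Icc 0 t) := fun s hs =>
    ((hderiv s ⟨hs.1, lt_of_le_of_lt hs.2 htT⟩).continuousAt).continuousWithinAt
  have hdz : ∀ s ∈ Set.Ico (0:ℝ) t, HasDerivWithinAt g 0 (Set.Ici s) s := fun s hs =>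
    (hderiv s ⟨hs.1, lt_trans hs.2 htT⟩).hasDerivWithinAt
  have := constant_of_has_deriv_right_zero hcont hdz t ⟨ht0, le_refl t⟩
  rw [key t htT, key 0 hT, this]
end

section
/- Assume the super-critical condition k := (λ/2)ρ₀T > 1. If x < 0 and the velocity v satisfies -x/T < v ≤ -(x/T)·k, then the characteristic position X(t) = (T-t)[x/T + (α/(1-k))·((T/(T-t))^{1-k} - 1)] with α = v + x/T satisfies X(t) < 0 for all t ∈ (0,T). -/
/-- Super-critical case `k > 1`: if `x < 0` and `-x/T < v ≤ -(x/T)·k`, the characteristic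
position `X(t)` stays negative on `(0,T)`. -/
theorem characteristic_stays_negative (T k x v α : ℝ) (hT : 0 < T) (hk : 1 < k)
    (hx : x < 0) (hα : α = v + x / T)
    (hv1 : -x / T < v) (hv2 : v ≤ -(x / T) * k)
    (X : ℝ → ℝ)
    (hX : ∀ t ∈ Set.Ico (0:ℝ) T,
      X t = (T - t) * (x / T + α / (1 - k) * ((T / (T - t)) ^ (1 - k) - 1))) :
    ∀ t ∈ Set.Ioo (0:ℝ) T, X t < 0 := by
  intro t ht
  obtain ⟨ht0, htT⟩ := ht
  have hs : 0 < T - t := by linarith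
  rw [hX t ⟨le_of_lt ht0, htT⟩]
  have hαpos : 0 < α := by
    have h1 : -x / T = -(x / T) := by ring
    rw [hα]; rw [h1] at hv1; linarith
  have hk1 : 1 - k < 0 := by linarith
  have hc : α / (1 - k) < 0 := div_neg_of_pos_of_neg hαpos hk1
  have hα2 : α ≤ x / T * (1 - k) := by
    rw [hα]; nlinarith
  have hle : x / T ≤ α / (1 - k) := by
    rw [le_div_iff_of_neg hk1]; linarith [hα2]
  have hr : (0:ℝ) < (T / (T - t)) ^ (1 - k) :=
    Real.rpow_pos_of_pos (div_pos hT hs) _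
  have hcr : α / (1 - k) * ((T / (T - t)) ^ (1 - k)) < 0 :=
    mul_neg_of_neg_of_pos hc hr
  have hbr : x / T + α / (1 - k) * ((T / (T - t)) ^ (1 - k) - 1) < 0 := by
    nlinarith
  exact mul_neg_of_pos_of_neg hs hbr
end

section
/- For the Gaussian profile φ(x) = (1/√(2π))e^{-x}, the function f(t,x,v) = m(t)φ(a(t)(v-b(t)x)²) satisfies the PDE ∂ₜf + v∂ₓf = (λ/2)ρ·∂ᵥ((v - u)f) with ρ = m/√a and u = bx, provided (m,a,b) solve m' = λm²/(2√a), a' = 2ab + λm√a, b' = -b². -/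
/-- With the Gaussian profile `φ(x) = (1/√(2π))e^{-x}`, the ansatz
`f(t,x,v) = m(t) φ(a(t)(v - b(t)x)²)` solves the PDE
`∂ₜ f + v ∂ₓ f = (λ/2) ρ ∂ᵥ((v - u) f)` with `ρ = m/√a`, `u = bx`, provided `(m,a,b)`
solve the ODE system `m' = λm²/(2√a)`, `a' = 2ab + λm√a`, `b' = -b²`. -/
theorem ansatz_solves_pde (lam : ℝ) (hlam : 0 < lam) (s : Set ℝ)
    (m a b : ℝ → ℝ) (ha_pos : ∀ t ∈ s, 0 < a t) (hm_pos : ∀ t ∈ s, 0 < m t)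
    (hm : ∀ t ∈ s, HasDerivAt m (lam * (m t) ^ 2 / (2 * Real.sqrt (a t))) t)
    (ha : ∀ t ∈ s, HasDerivAt a (2 * a t * b t + lam * m t * Real.sqrt (a t)) t)
    (hb : ∀ t ∈ s, HasDerivAt b (-(b t) ^ 2) t)
    (f : ℝ → ℝ → ℝ → ℝ)
    (hf : ∀ t x v, f t x v =
      m t * (1 / Real.sqrt (2 * Real.pi) * Real.exp (-(a t * (v - b t * x) ^ 2)))) :
    ∀ t ∈ s, ∀ x v : ℝ,
      deriv (fun τ => f τ x v) t + v * deriv (fun y => f t y v) x =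
        lam / 2 * (m t / Real.sqrt (a t)) *
          deriv (fun w => (w - b t * x) * f t x w) v := by
  intro t ht x v
  set c : ℝ := 1 / Real.sqrt (2 * Real.pi) with hc
  have hm' := hm t ht
  have ha' := ha t ht
  have hb' := hb t ht
  have haT : 0 < a t := ha_pos t ht
  set sq : ℝ := Real.sqrt (a t) with hsq
  have hsqpos : 0 < sq := Real.sqrt_pos.mpr haT
  have hs2 : sq ^ 2 = a t := Real.sq_sqrt haT.le
  -- t derivative
  have hDt : HasDerivAt (fun τ => f τ x v)
      (lam * (m t) ^ 2 / (2 * sq) * (c * Real.exp (-(a t * (v - b t * x) ^ 2))) +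
        m t * (c * (Real.exp (-(a t * (v - b t * x) ^ 2)) *
          (-((2 * a t * b t + lam * m t * sq) * (v - b t * x) ^ 2 +
            a t * (2 * (v - b t * x) ^ 1 * (-(-(b t) ^ 2 * x)))))))) t := by
    have h1 : (fun τ => f τ x v) =
        fun τ => m τ * (c * Real.exp (-(a τ * (v - b τ * x) ^ 2))) :=
      funext fun τ => hf τ x v
    rw [h1]
    exact hm'.mul ((((ha'.mul (((hb'.mul_const x).const_sub v).pow 2)).neg).exp).const_mul c)
  -- x derivative
  have hDx : HasDerivAt (fun y => f t y v)
      (m t * (c * (Real.exp (-(a t * (v - b t * x) ^ 2)) *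
        (-(a t * (2 * (v - b t * x) ^ 1 * (-(b t * 1)))))))) x := by
    have h1 : (fun y => f t y v) =
        fun y => m t * (c * Real.exp (-(a t * (v - b t * y) ^ 2))) :=
      funext fun y => hf t y v
    rw [h1]
    exact (((((((hasDerivAt_id x).const_mul (b t)).const_sub v).pow 2).const_mul
      (a t)).neg).exp).const_mul c |>.const_mul (m t)
  -- v derivative
  have hDv : HasDerivAt (fun w => (w - b t * x) * f t x w)
      ((1 - 0) * (m t * (c * Real.exp (-(a t * (v - b t * x) ^ 2)))) + (v - b t * x) *
        (m t * (c * (Real.exp (-(a t * (v - b t * x) ^ 2)) *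
          (-(a t * (2 * (v - b t * x) ^ 1 * (1 - 0)))))))) v := by
    have h1 : (fun w => (w - b t * x) * f t x w) =
        fun w => (w - b t * x) * (m t * (c * Real.exp (-(a t * (w - b t * x) ^ 2)))) :=
      funext fun w => by rw [hf]
    rw [h1]
    have hw : HasDerivAt (fun w : ℝ => w - b t * x) (1 - 0) v :=
      (hasDerivAt_id v).sub (hasDerivAt_const v (b t * x))
    exact hw.mul ((((((hw.pow 2).const_mul (a t)).neg).exp).const_mul c).const_mul (m t))
  rw [hDt.deriv, hDx.deriv, hDv.deriv]
  rw [← hs2]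
  have h2s : (2 : ℝ) * sq ≠ 0 := by positivity
  field_simp
  ring
end
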